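/- If the Nim-sum of a list s of natural numbers is not equal to 2^h − 1 for any integer h ≥ 1, then incrementing any single entry of s by 1 produces a list with nonzero Nim-sum; formally, for every list s and every index i < s.length, if (¬ ∃ h ≥ 1, nimSum s = 2^h − 1), then nimSum (s.set i (s.get i + 1)) ≠ 0. -/

import Mathlib

/-- The Nim-sum of a list of naturals: the XOR of all its entries. -/
def nimSum (l : List ℕ) : ℕ := l.foldr (· ^^^ ·) 0

lemma nimSum_cons (a : ℕ) (t : List ℕ) : nimSum (a :: t) = a ^^^ nimSum t := rfl

lemma nimSum_set (s : List ℕ) (i : ℕ) (hi : i < s.length) (v : ℕ) :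
    nimSum (s.set i v) = (nimSum s ^^^ s.get ⟨i, hi⟩) ^^^ v := by
  induction s generalizing i with
  | nil => simp at hi
  | cons a t ih =>
    cases i with
    | zero =>
      simp only [List.set, nimSum_cons, List.get]
      rw [Nat.xor_comm a (nimSum t), Nat.xor_assoc, Nat.xor_assoc,
        Nat.xor_xor_cancel_left, Nat.xor_comm]
    | succ n =>
      simp only [List.set, nimSum_cons, List.get]
      rw [ih n (by simpa using hi)]
      rw [Nat.xor_assoc, Nat.xor_assoc, Nat.xor_assoc]

lemma xor_succ (x : ℕ) : ∃ h ≥ 1, x ^^^ (x + 1) = 2 ^ h - 1 := by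
  induction x using Nat.strong_induction_on with
  | _ x ih =>
    rcases Nat.even_or_odd x with he | ho
    · refine ⟨1, le_refl 1, ?_⟩
      obtain ⟨k, rfl⟩ := he
      have h1 : k + k = Nat.bit false k := by simp [Nat.bit]; omega
      have h2 : k + k + 1 = Nat.bit true k := by simp [Nat.bit]; omega
      rw [h2, h1, Nat.xor_bit]
      simp [Nat.bit]
    · obtain ⟨y, rfl⟩ := ho
      obtain ⟨h, hh1, hh⟩ := ih y (by omega)
      refine ⟨h + 1, by omega, ?_⟩
      have h1 : 2 * y + 1 = Nat.bit true y := by simp [Nat.bit]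
      have h2 : 2 * y + 1 + 1 = Nat.bit false (y + 1) := by simp [Nat.bit]; omega
      rw [h2, h1, Nat.xor_bit]
      have : 1 ≤ 2 ^ h := Nat.one_le_two_pow
      simp only [Nat.bit, hh]
      rw [pow_succ]
      simp
      omega

theorem nimSum_set_ne_zero (s : List ℕ) (i : ℕ) (hi : i < s.length)
    (h : ¬ ∃ h ≥ 1, nimSum s = 2 ^ h - 1) :
    nimSum (s.set i (s.get ⟨i, hi⟩ + 1)) ≠ 0 := by
  intro h0
  rw [nimSum_set s i hi] at h0
  set x := s.get ⟨i, hi⟩ with hx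
  have hs : nimSum s = x ^^^ (x + 1) := by
    have h1 : (nimSum s ^^^ x) ^^^ (x + 1) ^^^ (x + 1) = 0 ^^^ (x + 1) := by rw [h0]
    rw [Nat.xor_xor_cancel_right, Nat.zero_xor] at h1
    have h2 : (nimSum s ^^^ x) ^^^ x = (x + 1) ^^^ x := by rw [h1]
    rw [Nat.xor_xor_cancel_right] at h2
    rw [h2, Nat.xor_comm]
  obtain ⟨k, hk1, hk⟩ := xor_succ x
  exact h ⟨k, hk1, hs.trans hk⟩
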